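/- (Equality of do- and info-intervention conditional probabilities) For an info-causal DAG and arbitrary disjoint node sets A, B, C, the do-intervention and info-intervention conditionals agree: P(x_B | do(x̃_A), x_C) = P(x_B | σ(x̃_A), x_C). -/
import Mathlib


open Finset

/-- The info-intervention distribution `P(x | σ(x̃_A)) = ∏_{k∈V} P(x_k | x*_{pa(k)})`,
where the kernel `q v a x` stands for `P(x_v = a | x_{pa(v)})` (depending only on the
parent coordinates of `x`), and `x*_j = x̃_j` if `j ∈ A`, else `x_j`. -/
noncomputable def infoDist {V Ω : Type*} [Fintype V] [DecidableEq V]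
    (q : V → Ω → (V → Ω) → ℝ) (A : Finset V) (xt : V → Ω) (x : V → Ω) : ℝ :=
  ∏ v : V, q v (x v) (fun j => if j ∈ A then xt j else x j)

/-- Marginal of a (discrete) distribution `p` on the coordinates in `S`, evaluated at `y`. -/
noncomputable def Marg {V Ω : Type*} [Fintype V] [DecidableEq V] [Fintype Ω] [DecidableEq Ω]
    (p : (V → Ω) → ℝ) (S : Finset V) (y : V → Ω) : ℝ :=
  ∑ x : V → Ω, if ∀ i ∈ S, x i = y i then p x else 0

/-- The do-intervention distribution
`P(x | do(x̃_A)) = ∏_{k∉A} P(x_k | x_{pa(k)}) · ∏_{j∈A} 1[x_j = x̃_j]`. -/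
noncomputable def doDist {V Ω : Type*} [Fintype V] [DecidableEq V] [DecidableEq Ω]
    (q : V → Ω → (V → Ω) → ℝ) (A : Finset V) (xt : V → Ω) (x : V → Ω) : ℝ :=
  ∏ v : V, if v ∈ A then (if x v = xt v then (1 : ℝ) else 0) else q v (x v) x

/-- Equality of do- and info-intervention conditional probabilities:
`P(x_B | do(x̃_A), x_C) = P(x_B | σ(x̃_A), x_C)` for arbitrary pairwise disjoint node sets
`A, B, C`, where the conditionals are ratios of marginals of the respective intervention
distributions. -/
lemma marg_do_eq_info {V Ω : Type*} [Fintype V] [DecidableEq V] [Fintype Ω] [DecidableEq Ω]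
    (q : V → Ω → (V → Ω) → ℝ) (hnorm : ∀ v x, ∑ a : Ω, q v a x = 1)
    (A S : Finset V) (hAS : Disjoint A S) (xt y : V → Ω) :
    Marg (doDist q A xt) S y = Marg (infoDist q A xt) S y := by
  classical
  set E := Equiv.piEquivPiSubtypeProd (· ∈ A) (fun _ : V => Ω) with hE
  set c : (({x // x ∉ A} → Ω) × ({x // x ∈ A} → Ω)) ≃ (V → Ω) :=
    (Equiv.prodComm _ _).trans E.symm with hc
  unfold Marg doDist infoDist
  rw [← Equiv.sum_comp c, ← Equiv.sum_comp c
    (fun x => if ∀ i ∈ S, x i = y i then ∏ v : V, q v (x v)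
      (fun j => if j ∈ A then xt j else x j) else 0)]
  rw [Fintype.sum_prod_type, Fintype.sum_prod_type]
  refine Finset.sum_congr rfl fun g _ => ?_
  set z : V → Ω := fun j => if h : j ∈ A then xt j else g ⟨j, h⟩ with hz
  have hnotA : ∀ i ∈ S, i ∉ A := fun i hi hiA => (Finset.disjoint_left.mp hAS hiA) hi
  have hx : ∀ (f : {v // v ∈ A} → Ω) (j : V), c (g, f) j
      = if h : j ∈ A then f ⟨j, h⟩ else g ⟨j, h⟩ := fun f j => rfl
  have hcond : ∀ f : {v // v ∈ A} → Ω,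
      (∀ i ∈ S, c (g, f) i = y i) ↔ (∀ i ∈ S, z i = y i) := by
    intro f
    constructor <;> intro h i hi <;>
      · have := h i hi
        simpa [hx, hz, hnotA i hi] using this
  have hstar : ∀ f : {v // v ∈ A} → Ω,
      (fun j => if j ∈ A then xt j else c (g, f) j) = z := by
    intro f; funext j
    by_cases h : j ∈ A <;> simp [hx, hz, h]
  have hR : (∑ f : {v // v ∈ A} → Ω,
      if ∀ i ∈ S, c (g, f) i = y i then ∏ v : V, q v (c (g, f) v)
        (fun j => if j ∈ A then xt j else c (g, f) j) else 0)
      = if ∀ i ∈ S, z i = y i then ∏ v : {v // v ∉ A}, q (v : V) (g v) z else 0 := by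
    have hp : ∀ f : {v // v ∈ A} → Ω,
        (∏ v : V, q v (c (g, f) v) (fun j => if j ∈ A then xt j else c (g, f) j))
        = (∏ v : {v // v ∈ A}, q (v : V) (f v) z)
          * ∏ v : {v // v ∉ A}, q (v : V) (g v) z := by
      intro f
      rw [hstar f, ← Fintype.prod_subtype_mul_prod_subtype (· ∈ A)
        (fun v => q v (c (g, f) v) z)]
      congr 1 <;> refine Finset.prod_congr (by congr!) fun v _ => ?_
      · rw [hx, dif_pos v.2]
      · rw [hx, dif_neg v.2]
    simp only [hp, hcond]
    by_cases hcnd : ∀ i ∈ S, z i = y i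
    · simp only [if_pos hcnd, ← Finset.sum_mul]
      rw [← Fintype.prod_sum (fun (v : {v // v ∈ A}) (a : Ω) => q (v : V) a z)]
      simp [hnorm]
    · simp only [if_neg hcnd, Finset.sum_const_zero]
  have hL : (∑ f : {v // v ∈ A} → Ω,
      if ∀ i ∈ S, c (g, f) i = y i then ∏ v : V,
        if v ∈ A then (if c (g, f) v = xt v then (1 : ℝ) else 0)
        else q v (c (g, f) v) (c (g, f)) else 0)
      = if ∀ i ∈ S, z i = y i then ∏ v : {v // v ∉ A}, q (v : V) (g v) z else 0 := by
    have hsplit : ∀ f : {v // v ∈ A} → Ω,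
        (∏ v : V, if v ∈ A then (if c (g, f) v = xt v then (1 : ℝ) else 0)
          else q v (c (g, f) v) (c (g, f)))
        = (∏ v : {v // v ∈ A}, if f v = xt (v : V) then (1 : ℝ) else 0)
          * ∏ v : {v // v ∉ A}, q (v : V) (g v) (c (g, f)) := by
      intro f
      rw [← Fintype.prod_subtype_mul_prod_subtype (· ∈ A)
        (fun v => if v ∈ A then (if c (g, f) v = xt v then (1 : ℝ) else 0)
          else q v (c (g, f) v) (c (g, f)))]
      congr 1 <;> refine Finset.prod_congr (by congr!) fun v _ => ?_
      · rw [if_pos v.2, hx, dif_pos v.2]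
      · rw [if_neg v.2, hx, dif_neg v.2]
    have hind : ∀ f : {v // v ∈ A} → Ω,
        (∏ v : {v // v ∈ A}, if f v = xt (v : V) then (1 : ℝ) else 0)
        = if f = (fun v : {v // v ∈ A} => xt (v : V)) then 1 else 0 := by
      intro f
      by_cases hf : f = fun v : {v // v ∈ A} => xt (v : V)
      · subst hf; simp
      · rw [if_neg hf]
        obtain ⟨v, hv⟩ : ∃ v, f v ≠ xt (v : V) := by
          by_contra h; push_neg at h; exact hf (funext h)
        exact Finset.prod_eq_zero (Finset.mem_univ v) (by simp [hv])
    simp only [hsplit, hind, hcond]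
    rw [Finset.sum_eq_single (fun v : {v // v ∈ A} => xt (v : V))]
    · have hez : c (g, (fun v : {v // v ∈ A} => xt (v : V))) = z := by
        funext j; by_cases h : j ∈ A <;> simp [hx, hz, h]
      simp [hez]
    · intro f _ hf
      simp [hf]
    · intro h; exact absurd (Finset.mem_univ _) h
  rw [hL, hR]

theorem do_eq_info_conditional {V Ω : Type*} [Fintype V] [DecidableEq V]
    [Fintype Ω] [DecidableEq Ω]
    (pa : V → Finset V) (q : V → Ω → (V → Ω) → ℝ) (P : (V → Ω) → ℝ)
    (hloc : ∀ v a (x y : V → Ω), (∀ j ∈ pa v, x j = y j) → q v a x = q v a y)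
    (hq0 : ∀ v a x, 0 ≤ q v a x) (hnorm : ∀ v x, ∑ a : Ω, q v a x = 1)
    (hfact : ∀ x, P x = ∏ v : V, q v (x v) x)
    (A B C : Finset V) (hAB : Disjoint A B) (hAC : Disjoint A C) (hBC : Disjoint B C)
    (xt y : V → Ω)
    (hpos1 : Marg (doDist q A xt) C y ≠ 0)
    (hpos2 : Marg (infoDist q A xt) C y ≠ 0) :
    Marg (doDist q A xt) (B ∪ C) y / Marg (doDist q A xt) C y
      = Marg (infoDist q A xt) (B ∪ C) y / Marg (infoDist q A xt) C y := by
  have h1 : Disjoint A (B ∪ C) := Finset.disjoint_union_right.mpr ⟨hAB, hAC⟩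
  rw [← marg_do_eq_info q hnorm A (B ∪ C) h1 xt y,
      ← marg_do_eq_info q hnorm A C hAC xt y]
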